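/- Let G : ℝ → ℝ be locally Lipschitz with G(u) < 0 for u ≥ R for some R > 0, and assume ∫_R^∞ du/G(u) is finite. With L := ψ_T(R) and F_L(x) := ∫_L^x du/G(u) for x ∈ [L,∞], extended by F_L(∞) := lim_{x→∞} F_L(x) ∈ (−∞, 0), the extended solution ψ_t(∞) satisfies the implicit equation F_L(ψ_t(∞)) = t + F_L(∞) for all t ∈ (0, T], and consequently for any 0 < t₀ ≤ t ≤ T one has ψ_t(∞) = ψ_{t₀}(∞) + ∫_{t₀}^t G(ψ_s(∞)) ds. -/

import Mathlib

open MeasureTheory Filter intervalIntegral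

open Set Metric

set_option maxHeartbeats 800000

/-- Locally Lipschitz functions are Lipschitz on compact sets. -/
lemma locLip_lipschitzOnWith_compact {f : ℝ → ℝ} (hf : LocallyLipschitz f) {K : Set ℝ}
    (hK : IsCompact K) : ∃ C : NNReal, LipschitzOnWith C f K := by
  have hfc : Continuous f := hf.continuous
  choose! C t ht hlip using hf
  obtain ⟨F, hFcov⟩ : ∃ F : Finset ℝ, K ⊆ ⋃ x ∈ F, interior (t x) := by
    obtain ⟨F, hF⟩ := hK.elim_nhds_subcover (fun x => interior (t x))
      (fun x _ => interior_mem_nhds.2 (ht x))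
    exact ⟨F, hF.2⟩
  obtain ⟨δ, hδ, hleb⟩ : ∃ δ > 0, ∀ y ∈ K, ∃ x : F, ball y δ ⊆ interior (t x) := by
    apply lebesgue_number_lemma_of_metric hK (fun i : F => isOpen_interior)
    intro y hy
    obtain ⟨x, hx⟩ := Set.mem_iUnion₂.1 (hFcov hy)
    exact Set.mem_iUnion.2 ⟨⟨x, hx.1⟩, hx.2⟩
  obtain ⟨D, hD⟩ := (hK.image hfc).isBounded.subset_ball 0
  -- dist bound on image
  have hDist : ∀ a ∈ K, ∀ b ∈ K, dist (f a) (f b) ≤ 2 * |D| := by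
    intro a ha b hb
    have h1 := hD (Set.mem_image_of_mem f ha)
    have h2 := hD (Set.mem_image_of_mem f hb)
    simp only [mem_ball, dist_zero_right] at h1 h2
    calc dist (f a) (f b) ≤ ‖f a‖ + ‖f b‖ := dist_le_norm_add_norm _ _
      _ ≤ 2 * |D| := by have := le_abs_self D; linarith
  set C0 : NNReal := F.sup C with hC0
  set Cbig : NNReal := max C0 (Real.toNNReal (2 * |D| / δ)) with hCbig
  refine ⟨Cbig, lipschitzOnWith_iff_dist_le_mul.2 fun a ha b hb => ?_⟩
  rcases lt_or_ge (dist a b) δ with hlt | hge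
  · obtain ⟨x, hxball⟩ := hleb a ha
    have hba : b ∈ t x := interior_subset (hxball (by simpa [mem_ball, dist_comm] using hlt))
    have haa : a ∈ t x := interior_subset (hxball (mem_ball_self hδ))
    have := lipschitzOnWith_iff_dist_le_mul.1 (hlip x) a haa b hba
    refine this.trans (mul_le_mul_of_nonneg_right ?_ dist_nonneg)
    have hx1 : C x ≤ C0 := Finset.le_sup x.2
    exact_mod_cast le_trans hx1 (le_max_left _ _)
  · have h1 : dist (f a) (f b) ≤ 2 * |D| := hDist a ha b hb
    have h2 : (2 * |D| / δ) * δ = 2 * |D| := by field_simp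
    have h3 : (2 * |D| / δ) ≤ (Cbig : ℝ) := by
      rw [hCbig]
      push_cast
      exact le_trans (Real.le_coe_toNNReal _) (by exact_mod_cast le_max_right _ _)
    calc dist (f a) (f b) ≤ 2 * |D| := h1
      _ = (2 * |D| / δ) * δ := h2.symm
      _ ≤ (Cbig : ℝ) * dist a b := by
          apply mul_le_mul h3 hge (le_of_lt hδ) (NNReal.coe_nonneg _)

lemma flow_unique (G : ℝ → ℝ) (hG : LocallyLipschitz G) {b : ℝ} {f g : ℝ → ℝ}
    (hf : ∀ s ∈ Icc (0:ℝ) b, HasDerivAt f (G (f s)) s)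
    (hg : ∀ s ∈ Icc (0:ℝ) b, HasDerivAt g (G (g s)) s)
    {t₀ : ℝ} (ht₀ : t₀ ∈ Icc (0:ℝ) b) (heq : f t₀ = g t₀) : EqOn f g (Icc 0 b) := by
  have hb : (0:ℝ) ≤ b := ht₀.1.trans ht₀.2
  have hfc : ContinuousOn f (Icc 0 b) := fun s hs => (hf s hs).continuousAt.continuousWithinAt
  have hgc : ContinuousOn g (Icc 0 b) := fun s hs => (hg s hs).continuousAt.continuousWithinAt
  set K : Set ℝ := f '' Icc 0 b ∪ g '' Icc 0 b with hKdef
  have hKcpt : IsCompact K :=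
    (isCompact_Icc.image_of_continuousOn hfc).union (isCompact_Icc.image_of_continuousOn hgc)
  obtain ⟨C, hC⟩ := locLip_lipschitzOnWith_compact hG hKcpt
  have hv : ∀ s : ℝ, LipschitzOnWith C (fun x => G x) ((fun _ => K) s) := fun _ => hC
  have h1 : EqOn f g (Icc 0 t₀) := by
    apply ODE_solution_unique_of_mem_Icc_left (v := fun _ x => G x) (s := fun _ => K) (fun t _ => hv t)
      (hfc.mono (Icc_subset_Icc_right ht₀.2)) ?_ ?_
      (hgc.mono (Icc_subset_Icc_right ht₀.2)) ?_ ?_ heq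
    · exact fun s hs => (hf s ⟨le_of_lt hs.1, hs.2.trans ht₀.2⟩).hasDerivWithinAt
    · exact fun s hs => mem_union_left _ (mem_image_of_mem f ⟨le_of_lt hs.1, hs.2.trans ht₀.2⟩)
    · exact fun s hs => (hg s ⟨le_of_lt hs.1, hs.2.trans ht₀.2⟩).hasDerivWithinAt
    · exact fun s hs => mem_union_right _ (mem_image_of_mem g ⟨le_of_lt hs.1, hs.2.trans ht₀.2⟩)
  have h2 : EqOn f g (Icc t₀ b) := by
    apply ODE_solution_unique_of_mem_Icc_right (v := fun _ x => G x) (s := fun _ => K) (fun t _ => hv t)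
      (hfc.mono (Icc_subset_Icc_left ht₀.1)) ?_ ?_
      (hgc.mono (Icc_subset_Icc_left ht₀.1)) ?_ ?_ heq
    · exact fun s hs => (hf s ⟨ht₀.1.trans hs.1, le_of_lt hs.2⟩).hasDerivWithinAt
    · exact fun s hs => mem_union_left _ (mem_image_of_mem f ⟨ht₀.1.trans hs.1, le_of_lt hs.2⟩)
    · exact fun s hs => (hg s ⟨ht₀.1.trans hs.1, le_of_lt hs.2⟩).hasDerivWithinAt
    · exact fun s hs => mem_union_right _ (mem_image_of_mem g ⟨ht₀.1.trans hs.1, le_of_lt hs.2⟩)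
  rw [← Icc_union_Icc_eq_Icc ht₀.1 ht₀.2]
  exact h1.union h2

section Flow
variable (G : ℝ → ℝ) (hG : LocallyLipschitz G) (ψ : ℝ → ℝ → ℝ)
  (hψ0 : ∀ x, ψ 0 x = x)
  (hψ : ∀ x : ℝ, ∀ t ≥ (0:ℝ), HasDerivAt (fun s => ψ s x) (G (ψ t x)) t)

include hG hψ0 hψ

lemma flow_mono : ∀ x y : ℝ, x ≤ y → ∀ t ≥ (0:ℝ), ψ t x ≤ ψ t y := by
  intro x y hxy t ht
  by_contra hcon
  push_neg at hcon
  have hcont : ContinuousOn (fun s => ψ s x - ψ s y) (Icc 0 t) := fun s hs =>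
    ((hψ x s hs.1).continuousAt.sub (hψ y s hs.1).continuousAt).continuousWithinAt
  have h0 : (0:ℝ) ∈ Icc (ψ 0 x - ψ 0 y) (ψ t x - ψ t y) := by
    rw [hψ0, hψ0]; constructor <;> [linarith; linarith]
  obtain ⟨s, hs, hseq⟩ := intermediate_value_Icc ht hcont h0
  have heq : ψ s x = ψ s y := by dsimp at hseq; linarith
  have := flow_unique G hG (f := fun u => ψ u x) (g := fun u => ψ u y)
    (fun u hu => hψ x u hu.1) (fun u hu => hψ y u hu.1) hs heq ⟨ht, le_refl t⟩
  dsimp at this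
  linarith

lemma flow_shift : ∀ x : ℝ, ∀ t₀ ≥ (0:ℝ), ∀ u ≥ (0:ℝ), ψ (t₀ + u) x = ψ u (ψ t₀ x) := by
  intro x t₀ ht₀ u hu
  have hf : ∀ s ∈ Icc (0:ℝ) u, HasDerivAt (fun v => ψ (t₀ + v) x) (G (ψ (t₀ + s) x)) s := by
    intro s hs
    have h1 := (hψ x (t₀ + s) (by linarith [hs.1])).comp s ((hasDerivAt_id s).const_add t₀)
    simpa [Function.comp_def] using h1
  have hg : ∀ s ∈ Icc (0:ℝ) u, HasDerivAt (fun v => ψ v (ψ t₀ x)) (G (ψ s (ψ t₀ x))) s :=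
    fun s hs => hψ (ψ t₀ x) s hs.1
  have heq : ψ (t₀ + 0) x = ψ 0 (ψ t₀ x) := by rw [add_zero, hψ0]
  have := flow_unique G hG (f := fun v => ψ (t₀ + v) x) (g := fun v => ψ v (ψ t₀ x))
    hf hg (t₀ := 0) ⟨le_refl 0, hu⟩ heq ⟨hu, le_refl u⟩
  exact this

lemma flow_neg : ∀ x : ℝ, G x < 0 → ∀ t ≥ (0:ℝ), G (ψ t x) < 0 := by
  intro x hx t ht
  have hne : ∀ s ∈ Icc (0:ℝ) t, G (ψ s x) ≠ 0 := by
    intro s hs h0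
    have hg : ∀ u ∈ Icc (0:ℝ) t, HasDerivAt (fun _ : ℝ => ψ s x) (G (ψ s x)) u := by
      intro u _; rw [h0]; exact hasDerivAt_const u _
    have := flow_unique G hG (f := fun u => ψ u x) (g := fun _ => ψ s x)
      (fun u hu => hψ x u hu.1) hg hs rfl ⟨le_refl 0, ht⟩
    dsimp at this
    rw [hψ0] at this
    rw [← this] at h0
    linarith
  by_contra hcon
  push_neg at hcon
  have hcont : ContinuousOn (fun s => G (ψ s x)) (Icc 0 t) :=
    hG.continuous.comp_continuousOn (fun s hs => (hψ x s hs.1).continuousAt.continuousWithinAt)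
  have h0 : (0:ℝ) ∈ Icc (G (ψ 0 x)) (G (ψ t x)) := by
    rw [hψ0]; exact ⟨le_of_lt hx, hcon⟩
  obtain ⟨s, hs, hseq⟩ := intermediate_value_Icc ht hcont h0
  exact hne s hs hseq

end Flow

/-- implicit equation and integral form for the solution started from +∞. -/
theorem stmt_1
    (G : ℝ → ℝ) (hG : LocallyLipschitz G)
    (R T : ℝ) (hR : 0 < R) (hT : 0 < T)
    (hGneg : ∀ u, R ≤ u → G u < 0)
    (hInt : IntegrableOn (fun u => 1 / G u) (Set.Ici R))
    (ψ : ℝ → ℝ → ℝ)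
    (hψ0 : ∀ x, ψ 0 x = x)
    (hψ : ∀ x : ℝ, ∀ t ≥ (0:ℝ), HasDerivAt (fun s => ψ s x) (G (ψ t x)) t)
    (ψinf : ℝ → ℝ)
    (hψinf : ∀ t > (0:ℝ), Tendsto (fun x => ψ t x) atTop (nhds (ψinf t)))
    (L : ℝ) (hL : L = ψ T R)
    (FL : ℝ → ℝ) (hFL : ∀ x : ℝ, FL x = ∫ u in L..x, 1 / G u)
    (FLinf : ℝ) (hFLlim : Tendsto FL atTop (nhds FLinf))
    (hFLneg : FLinf < 0) :
    (∀ t ∈ Set.Ioc (0:ℝ) T, FL (ψinf t) = t + FLinf) ∧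
    (∀ t₀ t : ℝ, 0 < t₀ → t₀ ≤ t → t ≤ T →
      ψinf t = ψinf t₀ + ∫ s in t₀..t, G (ψinf s)) := by
  have hmono := flow_mono G hG ψ hψ0 hψ
  have hshift := flow_shift G hG ψ hψ0 hψ
  have hnegflow := flow_neg G hG ψ hψ0 hψ
  have hGcont : Continuous G := hG.continuous
  -- continuity of trajectories on [0, b]
  have htrajcont : ∀ x : ℝ, ∀ b : ℝ, ContinuousOn (fun s => ψ s x) (Icc 0 b) :=
    fun x b s hs => (hψ x s hs.1).continuousAt.continuousWithinAt
  -- ψ · R is antitone on [0, T]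
  have hanti : AntitoneOn (fun s => ψ s R) (Icc 0 T) := by
    apply antitoneOn_of_deriv_nonpos (convex_Icc 0 T) (htrajcont R T)
    · intro s hs
      rw [interior_Icc] at hs
      exact (hψ R s hs.1.le).differentiableAt.differentiableWithinAt
    · intro s hs
      rw [interior_Icc] at hs
      rw [(hψ R s hs.1.le).deriv]
      exact (hnegflow R (hGneg R le_rfl) s hs.1.le).le
  have hLle : ∀ t ∈ Icc (0:ℝ) T, L ≤ ψ t R := by
    intro t ht
    rw [hL]
    exact hanti ht ⟨hT.le, le_rfl⟩ ht.2
  -- G is negative on [L, ∞)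
  have hGL : ∀ y : ℝ, L ≤ y → G y < 0 := by
    intro y hy
    rcases le_or_gt R y with h | h
    · exact hGneg y h
    · have hmem : y ∈ Icc (ψ T R) (ψ 0 R) := by
        rw [hψ0, ← hL]; exact ⟨hy, h.le⟩
      obtain ⟨t, ht, hteq⟩ := intermediate_value_Icc' hT.le (htrajcont R T) hmem
      rw [← hteq]
      exact hnegflow R (hGneg R le_rfl) t ht.1
  -- ψinf dominates all trajectories
  have hlim_mono : ∀ t : ℝ, 0 < t → ∀ x : ℝ, ψ t x ≤ ψinf t := fun t ht x =>
    ge_of_tendsto (hψinf t ht) ((eventually_ge_atTop x).mono fun y hy => hmono x y hy t ht.le)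
  -- Gronwall continuity: limit of shifted flows
  have key : ∀ t₀ ∈ Ioc (0:ℝ) T, ∀ u ∈ Icc (0:ℝ) T,
      Tendsto (fun x => ψ u (ψ t₀ x)) atTop (nhds (ψ u (ψinf t₀))) := by
    intro t₀ ht₀ u hu
    set x₀ := ψinf t₀ with hx₀
    set a := x₀ - 1 with ha
    obtain ⟨sm, hsm_mem, hsm'⟩ := isCompact_Icc.exists_isMinOn (nonempty_Icc.2 hT.le)
      (htrajcont a T)
    obtain ⟨sM, hsM_mem, hsM'⟩ := isCompact_Icc.exists_isMaxOn (nonempty_Icc.2 hT.le)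
      (htrajcont x₀ T)
    have hsm : ∀ s ∈ Icc (0:ℝ) T, ψ sm a ≤ ψ s a := fun s hs => isMinOn_iff.1 hsm' s hs
    have hsM : ∀ s ∈ Icc (0:ℝ) T, ψ s x₀ ≤ ψ sM x₀ := fun s hs => isMaxOn_iff.1 hsM' s hs
    set K : Set ℝ := Icc (ψ sm a) (ψ sM x₀) with hK
    obtain ⟨C, hC⟩ := locLip_lipschitzOnWith_compact hG (isCompact_Icc : IsCompact K)
    have hmem : ∀ z ∈ Icc a x₀, ∀ s ∈ Icc (0:ℝ) T, ψ s z ∈ K := by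
      intro z hz s hs
      constructor
      · exact (hsm s hs).trans (hmono a z hz.1 s hs.1)
      · exact (hmono z x₀ hz.2 s hs.1).trans (hsM s hs)
    have est : ∀ z ∈ Icc a x₀,
        dist (ψ u z) (ψ u x₀) ≤ dist z x₀ * Real.exp (C * T) := by
      intro z hz
      have h := dist_le_of_trajectories_ODE_of_mem (v := fun _ x => G x)
        (s := fun _ => K) (K := C) (f := fun s => ψ s z) (g := fun s => ψ s x₀)
        (a := 0) (b := T) (δ := dist z x₀)
        (fun _ _ => hC) (htrajcont z T)
        (fun s hs => (hψ z s hs.1).hasDerivWithinAt)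
        (fun s hs => hmem z hz s (Ico_subset_Icc_self hs))
        (htrajcont x₀ T)
        (fun s hs => (hψ x₀ s hs.1).hasDerivWithinAt)
        (fun s hs => hmem x₀ ⟨by linarith [hz.1, hz.2, sub_le_self x₀ one_pos.le], le_rfl⟩
          s (Ico_subset_Icc_self hs))
        (by show dist (ψ 0 z) (ψ 0 x₀) ≤ dist z x₀; rw [hψ0, hψ0]) u hu
      refine h.trans (mul_le_mul_of_nonneg_left ?_ dist_nonneg)
      exact Real.exp_le_exp.2 (mul_le_mul_of_nonneg_left (by linarith [hu.2]) C.coe_nonneg)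
    have hz0 : Tendsto (fun x => dist (ψ t₀ x) x₀) atTop (nhds 0) :=
      tendsto_iff_dist_tendsto_zero.1 (hψinf t₀ ht₀.1)
    have hzin : ∀ᶠ x in atTop, ψ t₀ x ∈ Icc a x₀ := by
      have h1 : ∀ᶠ y in nhds x₀, a ≤ y := eventually_ge_nhds (by rw [ha]; linarith)
      filter_upwards [(hψinf t₀ ht₀.1).eventually h1] with x hx
      exact ⟨hx, hlim_mono t₀ ht₀.1 x⟩
    rw [tendsto_iff_dist_tendsto_zero]
    apply squeeze_zero' (Eventually.of_forall fun x => dist_nonneg)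
      (hzin.mono fun x hx => est _ hx)
    simpa using hz0.mul_const (Real.exp (C * T))
  -- flow-limit identity
  have hpsiL : ∀ t₀ ∈ Ioc (0:ℝ) T, ∀ s : ℝ, t₀ ≤ s → s ≤ T →
      ψinf s = ψ (s - t₀) (ψinf t₀) := by
    intro t₀ ht₀ s hs1 hs2
    have h1 : Tendsto (fun x => ψ s x) atTop (nhds (ψinf s)) :=
      hψinf s (lt_of_lt_of_le ht₀.1 hs1)
    have h2 : Tendsto (fun x => ψ s x) atTop (nhds (ψ (s - t₀) (ψinf t₀))) := by
      have h3 := key t₀ ht₀ (s - t₀) ⟨by linarith, by linarith [ht₀.1]⟩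
      have h4 : (fun x => ψ s x) = fun x => ψ (s - t₀) (ψ t₀ x) := by
        funext x
        rw [← hshift x t₀ ht₀.1.le (s - t₀) (by linarith), add_sub_cancel]
      rw [h4]
      exact h3
    exact tendsto_nhds_unique h1 h2
  -- lower bound L for the limiting trajectory
  have htrajL : ∀ t₀ ∈ Ioc (0:ℝ) T, ∀ s : ℝ, t₀ ≤ s → s ≤ T →
      L ≤ ψ (s - t₀) (ψinf t₀) := by
    intro t₀ ht₀ s hs1 hs2
    have h1 : ψ s R = ψ (s - t₀) (ψ t₀ R) := by
      rw [← hshift R t₀ ht₀.1.le (s - t₀) (by linarith), add_sub_cancel]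
    have h2 : ψ (s - t₀) (ψ t₀ R) ≤ ψ (s - t₀) (ψinf t₀) :=
      hmono _ _ (hlim_mono t₀ ht₀.1 R) (s - t₀) (by linarith)
    have h3 : L ≤ ψ s R := hLle s ⟨by linarith [ht₀.1], hs2⟩
    linarith [h1 ▸ h3]
  -- derivative of FL
  have hFLderiv : ∀ y : ℝ, L ≤ y → HasDerivAt FL (1 / G y) y := by
    intro y hy
    have hFLfun : FL = fun x => ∫ u in L..x, 1 / G u := funext hFL
    rw [hFLfun]
    apply intervalIntegral.integral_hasDerivAt_right
    · apply ContinuousOn.intervalIntegrable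
      rw [uIcc_of_le hy]
      exact continuousOn_const.div hGcont.continuousOn fun u hu => (hGL u hu.1).ne
    · exact ((measurable_const.div hGcont.measurable).stronglyMeasurable).stronglyMeasurableAtFilter
    · exact ContinuousAt.div continuousAt_const hGcont.continuousAt (hGL y hy).ne
  -- main computation
  have claim2 : ∀ t₀ t : ℝ, 0 < t₀ → t₀ ≤ t → t ≤ T →
      (ψinf t = ψinf t₀ + ∫ s in t₀..t, G (ψinf s)) ∧
      (FL (ψinf t) - t = FL (ψinf t₀) - t₀) := by
    intro t₀ t h1 h2 h3
    have ht₀T : t₀ ∈ Ioc (0:ℝ) T := ⟨h1, h2.trans h3⟩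
    set x₀ := ψinf t₀ with hx₀
    set f : ℝ → ℝ := fun s => ψ (s - t₀) x₀ with hf
    have hfd : ∀ s ∈ Icc t₀ t, HasDerivAt f (G (f s)) s := by
      intro s hs
      have := (hψ x₀ (s - t₀) (by linarith [hs.1])).comp s ((hasDerivAt_id s).sub_const t₀)
      simpa [Function.comp_def] using this
    have hfeq : ∀ s ∈ Icc t₀ t, ψinf s = f s := fun s hs =>
      hpsiL t₀ ht₀T s hs.1 (hs.2.trans h3)
    have hfL : ∀ s ∈ Icc t₀ t, L ≤ f s := fun s hs =>
      htrajL t₀ ht₀T s hs.1 (hs.2.trans h3)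
    have hfco : ContinuousOn f (Icc t₀ t) := fun s hs =>
      (hfd s hs).continuousAt.continuousWithinAt
    have hft₀ : f t₀ = x₀ := by rw [hf]; simp [hψ0]
    have hft : f t = ψinf t := (hfeq t ⟨h2, le_rfl⟩).symm
    constructor
    · have hint : ∫ s in t₀..t, G (f s) = f t - f t₀ := by
        apply intervalIntegral.integral_eq_sub_of_hasDerivAt
        · intro s hs
          rw [uIcc_of_le h2] at hs
          exact hfd s hs
        · apply ContinuousOn.intervalIntegrable
          rw [uIcc_of_le h2]
          exact hGcont.comp_continuousOn hfco
      have hcongr : ∫ s in t₀..t, G (ψinf s) = ∫ s in t₀..t, G (f s) := by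
        apply intervalIntegral.integral_congr
        intro s hs
        rw [uIcc_of_le h2] at hs
        show G (ψinf s) = G (f s)
        rw [hfeq s hs]
      rw [hcongr, hint, hft, hft₀]
      ring
    · have hgd : ∀ s ∈ Icc t₀ t, HasDerivAt (fun s => FL (f s)) 1 s := by
        intro s hs
        have hne : G (f s) ≠ 0 := (hGL _ (hfL s hs)).ne
        have := (hFLderiv (f s) (hfL s hs)).comp s (hfd s hs)
        rwa [one_div, inv_mul_cancel₀ hne] at this
      have hint2 : ∫ s in t₀..t, (1:ℝ) = FL (f t) - FL (f t₀) := by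
        apply intervalIntegral.integral_eq_sub_of_hasDerivAt
        · intro s hs
          rw [uIcc_of_le h2] at hs
          exact hgd s hs
        · exact intervalIntegrable_const
      rw [show (∫ s in t₀..t, (1:ℝ)) = t - t₀ by simp] at hint2
      rw [hft, hft₀] at hint2
      linarith
  -- ψinf blows up at 0+
  have claimTop : Tendsto ψinf (nhdsWithin 0 (Ioi (0:ℝ))) atTop := by
    rw [Filter.tendsto_atTop]
    intro b
    have hc : Tendsto (fun s => ψ s (b + 1)) (nhds 0) (nhds (b + 1)) := by
      have := (hψ (b + 1) 0 le_rfl).continuousAt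
      rwa [ContinuousAt, hψ0] at this
    have h1 : ∀ᶠ s in nhds (0:ℝ), b < ψ s (b + 1) :=
      hc.eventually (eventually_gt_nhds (by linarith))
    filter_upwards [h1.filter_mono nhdsWithin_le_nhds, self_mem_nhdsWithin] with s hs hs'
    exact le_trans hs.le (hlim_mono s hs' (b + 1))
  constructor
  · intro t ht
    have hconst : ∀ᶠ t₀ in nhdsWithin 0 (Ioi (0:ℝ)), FL (ψinf t₀) - t₀ = FL (ψinf t) - t := by
      filter_upwards [Ioo_mem_nhdsGT_of_mem ⟨le_rfl, ht.1⟩] with t₀ ht₀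
      exact ((claim2 t₀ t ht₀.1 ht₀.2.le ht.2).2).symm
    have hlim : Tendsto (fun t₀ => FL (ψinf t₀) - t₀) (nhdsWithin 0 (Ioi (0:ℝ)))
        (nhds (FLinf - 0)) :=
      (hFLlim.comp claimTop).sub (tendsto_id.mono_right nhdsWithin_le_nhds)
    have h2 : Tendsto (fun t₀ => FL (ψinf t₀) - t₀) (nhdsWithin 0 (Ioi (0:ℝ)))
        (nhds (FL (ψinf t) - t)) :=
      tendsto_const_nhds.congr' (hconst.mono fun a ha => ha.symm)
    have := tendsto_nhds_unique h2 hlim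
    linarith
  · intro t₀ t h1 h2 h3
    exact (claim2 t₀ t h1 h2 h3).1
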